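/- Let Q be the 2×2 matrix with rows (2,2) and (−2,2), and let C̄₁, …, C̄₆ be the six closed trapezoid pairs of the frequency ring. Then: (a) for each j ∈ {1,…,6} and every n ∈ Qℤ², ∫_{C̄_j} e^{i n·ξ} dξ = π²/2 if n = 0 and = 0 if n ≠ 0 (i.e. each C̄_j is a frequency support of the lattice Qℤ², whose fundamental cell has area 8, with (2π)²/8 = π²/2); and (b) for every n ∈ 2ℤ², ∫_{[−π/2,π/2]²} e^{i n·ξ} dξ = π² if n = 0 and = 0 if n ≠ 0 (i.e. [−π/2,π/2]² is a frequency support of the lattice 2ℤ²). -/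

import Mathlib

open scoped Real Matrix
open MeasureTheory Set

/-- The closed frequency ring `R = [−π,π]² \ (−π/2,π/2)²`. -/
def freqRing : Set (Fin 2 → ℝ) :=
  {ξ | (|ξ 0| ≤ π ∧ |ξ 1| ≤ π) ∧ (π / 2 ≤ |ξ 0| ∨ π / 2 ≤ |ξ 1|)}

/-- `C̄₀ = [−π/2,π/2]²` and the six closed trapezoid pairs `C̄₁, …, C̄₆` of the
frequency ring, cut by the lines through the origin of slopes `±1, ±3, ±1/3`. -/
def trapPair : Fin 7 → Set (Fin 2 → ℝ) :=
  ![{ξ | |ξ 0| ≤ π / 2 ∧ |ξ 1| ≤ π / 2},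
    {ξ ∈ freqRing | |ξ 1| ≤ |ξ 0| ∧ |ξ 0| ≤ 3 * |ξ 1| ∧ ξ 0 * ξ 1 ≤ 0},
    {ξ ∈ freqRing | 3 * |ξ 1| ≤ |ξ 0|},
    {ξ ∈ freqRing | |ξ 1| ≤ |ξ 0| ∧ |ξ 0| ≤ 3 * |ξ 1| ∧ 0 ≤ ξ 0 * ξ 1},
    {ξ ∈ freqRing | |ξ 0| ≤ |ξ 1| ∧ |ξ 1| ≤ 3 * |ξ 0| ∧ ξ 0 * ξ 1 ≤ 0},
    {ξ ∈ freqRing | 3 * |ξ 0| ≤ |ξ 1|},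
    {ξ ∈ freqRing | |ξ 0| ≤ |ξ 1| ∧ |ξ 1| ≤ 3 * |ξ 0| ∧ 0 ≤ ξ 0 * ξ 1}]

namespace Stmt11

/-- right trapezoid in ℝ×ℝ -/
def S (u v : ℝ) : Set (ℝ × ℝ) :=
  {p | (π/2 ≤ p.1 ∧ p.1 ≤ π) ∧ u * p.1 ≤ p.2 ∧ p.2 ≤ v * p.1}

lemma S_closed (u v : ℝ) : IsClosed (S u v) := by
  have : S u v = ({p : ℝ × ℝ | π/2 ≤ p.1} ∩ {p | p.1 ≤ π}) ∩
      ({p | u * p.1 ≤ p.2} ∩ {p | p.2 ≤ v * p.1}) := by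
    ext p
    simp only [S, Set.mem_setOf_eq, Set.mem_inter_iff]
  rw [this]
  exact (((isClosed_le continuous_const continuous_fst).inter
    (isClosed_le continuous_fst continuous_const)).inter
    ((isClosed_le (continuous_const.mul continuous_fst) continuous_snd).inter
    (isClosed_le continuous_snd (continuous_const.mul continuous_fst))))

lemma S_compact (u v : ℝ) : IsCompact (S u v) := by
  refine IsCompact.of_isClosed_subset
    ((isCompact_Icc (a := π/2) (b := π)).prod
      (isCompact_Icc (a := -((|u|+|v|)*π)) (b := (|u|+|v|)*π))) (S_closed u v) ?_
  rintro ⟨x, y⟩ ⟨⟨h1, h2⟩, h3, h4⟩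
  have hx : 0 ≤ x := le_trans (by positivity) h1
  constructor
  · exact ⟨h1, h2⟩
  · constructor
    · have : -(|u| * x) ≤ u * x := by nlinarith [neg_abs_le u]
      have h5 : |u| * x ≤ |u| * π := by nlinarith [abs_nonneg u]
      nlinarith [abs_nonneg u, abs_nonneg v, Real.pi_pos]
    · have : v * x ≤ |v| * x := by nlinarith [le_abs_self v]
      have h5 : |v| * x ≤ |v| * π := by nlinarith [abs_nonneg v]
      nlinarith [abs_nonneg u, abs_nonneg v, Real.pi_pos]

lemma fubini_S (u v : ℝ) (g : ℝ × ℝ → ℂ) (hg : Continuous g) :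
    ∫ p in S u v, g p = ∫ x in Icc (π/2) π, ∫ y in Icc (u*x) (v*x), g (x, y) := by
  have hSm : MeasurableSet (S u v) := (S_closed u v).measurableSet
  have hint : IntegrableOn g (S u v) :=
    hg.continuousOn.integrableOn_compact (S_compact u v)
  rw [← integral_indicator hSm]
  have hint2 : Integrable (Function.uncurry fun x y => (S u v).indicator g (x, y))
      ((volume : Measure ℝ).prod (volume : Measure ℝ)) := by
    rw [← Measure.volume_eq_prod]
    have : Function.uncurry (fun x y => (S u v).indicator g (x, y)) = (S u v).indicator g := by
      funext p; cases p; rfl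
    rw [this, integrable_indicator_iff hSm]
    exact hint
  rw [Measure.volume_eq_prod]
  have e2 : (∫ z : ℝ × ℝ, (S u v).indicator g z ∂((volume : Measure ℝ).prod volume))
      = ∫ x : ℝ, ∫ y : ℝ, (S u v).indicator g (x, y) := (integral_integral hint2).symm
  rw [e2]
  have hinner : ∀ x : ℝ, (∫ y : ℝ, (S u v).indicator g (x, y)) =
      (Icc (π/2) π).indicator (fun x => ∫ y in Icc (u*x) (v*x), g (x, y)) x := by
    intro x
    by_cases hx : x ∈ Icc (π/2) π
    · rw [indicator_of_mem hx, ← integral_indicator measurableSet_Icc]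
      congr 1
      funext y
      by_cases hy : y ∈ Icc (u*x) (v*x)
      · rw [indicator_of_mem hy, indicator_of_mem]
        exact ⟨⟨hx.1, hx.2⟩, hy.1, hy.2⟩
      · rw [indicator_of_notMem hy, indicator_of_notMem]
        intro hmem
        exact hy ⟨hmem.2.1, hmem.2.2⟩
    · rw [indicator_of_notMem hx]
      have : ∀ y : ℝ, (S u v).indicator g (x, y) = 0 := by
        intro y
        apply indicator_of_notMem
        intro hmem
        exact hx ⟨hmem.1.1, hmem.1.2⟩
      simp [this]
  simp_rw [hinner]
  rw [integral_indicator measurableSet_Icc]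


lemma cos43 (k : ℤ) : Real.cos (4*k*π/3) = Real.cos (2*k*π/3) := by
  rw [show (4*(k:ℝ)*π/3) = -(2*k*π/3) + k*(2*π) by ring, Real.cos_add_int_mul_two_pi,
    Real.cos_neg]

lemma hasDerivAt_exp_mul (c : ℂ) (x : ℝ) :
    HasDerivAt (fun y : ℝ => Complex.exp (c * y)) (c * Complex.exp (c * x)) x := by
  have := ((Complex.hasDerivAt_exp (c * (x:ℂ))).comp x
    (by simpa only [mul_one] using ((hasDerivAt_id (x : ℂ)).const_mul c).comp_ofReal))
  exact this.congr_deriv (mul_comm _ _)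

/-- `∫_{π/2}^π e^{irx} dx = ∫_{π/2}^π e^{-irx} dx` for `r = 4k/3`. -/
lemma expIcc_symm (r : ℝ) (k : ℤ) (h : 3 * r = 4 * k) :
    ∫ x in Icc (π/2) π, Complex.exp (Complex.I * r * x) =
      ∫ x in Icc (π/2) π, Complex.exp (-(Complex.I * r * x)) := by
  by_cases hr : r = 0
  · simp [hr]
  have hle : (π/2 : ℝ) ≤ π := by linarith [Real.pi_pos]
  have hc : (Complex.I * r : ℂ) ≠ 0 := mul_ne_zero Complex.I_ne_zero (by exact_mod_cast hr)
  have hc' : (-(Complex.I * r) : ℂ) ≠ 0 := neg_ne_zero.mpr hc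
  have e1 : ∀ x : ℝ, Complex.I * r * x = (Complex.I * r) * x := fun x => rfl
  have e2 : ∀ x : ℝ, -(Complex.I * (r:ℂ) * x) = (-(Complex.I * r)) * x := fun x => by ring
  simp_rw [e2]
  rw [integral_Icc_eq_integral_Ioc, integral_Icc_eq_integral_Ioc,
    ← intervalIntegral.integral_of_le hle, ← intervalIntegral.integral_of_le hle,
    integral_exp_mul_complex hc, integral_exp_mul_complex hc']
  have hrr : r = 4 * k / 3 := by linarith
  have E : ∀ s : ℝ, Complex.I * (r:ℂ) * s = ((r * s : ℝ) : ℂ) * Complex.I := by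
    intro s; push_cast; ring
  have E' : ∀ s : ℝ, (-(Complex.I * (r:ℂ))) * s = ((-(r * s) : ℝ) : ℂ) * Complex.I := by
    intro s; push_cast; ring
  rw [E π, E (π/2), E' π, E' (π/2), Complex.exp_mul_I, Complex.exp_mul_I, Complex.exp_mul_I,
    Complex.exp_mul_I]
  have hcos : Complex.cos ((r * π : ℝ) : ℂ) = Complex.cos ((r * (π/2) : ℝ) : ℂ) := by
    rw [← Complex.ofReal_cos, ← Complex.ofReal_cos]
    congr 1
    rw [show r * π = 4*k*π/3 by rw [hrr]; ring, show r * (π/2) = 2*k*π/3 by rw [hrr]; ring]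
    exact cos43 k
  push_cast
  rw [Complex.cos_neg, Complex.cos_neg, Complex.sin_neg, Complex.sin_neg]
  push_cast at hcos
  rw [hcos]
  field_simp
  ring

lemma hasDeriv_xexp (d : ℂ) (hd : d ≠ 0) (x : ℝ) :
    HasDerivAt (fun t : ℝ => Complex.exp (d * t) * ((t:ℂ)/d - (d^2)⁻¹))
      ((x:ℂ) * Complex.exp (d * x)) x := by
  have hid : HasDerivAt (fun t : ℝ => (t : ℂ)) 1 x := by
    simpa using (hasDerivAt_id (x : ℂ)).comp_ofReal
  have hlin : HasDerivAt (fun t : ℝ => ((t:ℂ) / d - (d^2)⁻¹)) (1/d) x := by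
    simpa using (hid.div_const d).sub_const ((d^2)⁻¹)
  have := (hasDerivAt_exp_mul d x).mul hlin
  refine this.congr_deriv ?_
  field_simp
  ring

/-- `∫_{π/2}^π (2/3)x (e^{iax} + e^{-iax}) dx = 0` for `a = 4k ≠ 0`. -/
lemma xexp_int (a : ℝ) (k : ℤ) (hk : a = 4 * k) (ha : a ≠ 0) :
    ∫ x in Icc (π/2) π,
      ((2/3 * x : ℝ) : ℂ) * (Complex.exp (Complex.I * a * x) + Complex.exp (-(Complex.I * a * x)))
      = 0 := by
  have hle : (π/2 : ℝ) ≤ π := by linarith [Real.pi_pos]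
  set c : ℂ := Complex.I * a with hcdef
  have hc : c ≠ 0 := mul_ne_zero Complex.I_ne_zero (by exact_mod_cast ha)
  have hc' : -c ≠ 0 := neg_ne_zero.mpr hc
  set Φ : ℝ → ℂ := fun t =>
    (2/3 : ℂ) * (Complex.exp (c * t) * (t / c - (c^2)⁻¹) + Complex.exp (-c * t) * (t / (-c) - ((-c)^2)⁻¹))
    with hΦ
  have hD : ∀ x : ℝ, HasDerivAt Φ
      (((2/3 * x : ℝ) : ℂ) * (Complex.exp (c * x) + Complex.exp (-c * x))) x := by
    intro x
    have h1 := hasDeriv_xexp c hc x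
    have h2 := hasDeriv_xexp (-c) hc' x
    have := ((h1.add h2).const_mul (2/3 : ℂ))
    refine this.congr_deriv ?_
    push_cast
    ring
  rw [integral_Icc_eq_integral_Ioc, ← intervalIntegral.integral_of_le hle]
  have hInt : IntervalIntegrable
      (fun x : ℝ => ((2/3 * x : ℝ) : ℂ) * (Complex.exp (c * x) + Complex.exp (-c * x)))
      volume (π/2) π := by
    apply Continuous.intervalIntegrable
    fun_prop
  have heq' : ∀ x : ℝ, -(c * (x:ℂ)) = (-c) * x := fun x => by ring
  simp_rw [heq']
  rw [intervalIntegral.integral_eq_sub_of_hasDerivAt (fun x _ => hD x) hInt]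
  have exp1 : Complex.exp (c * (π:ℂ)) = 1 := by
    rw [show c * (π:ℂ) = ((2*k : ℤ) : ℂ) * (2 * π * Complex.I) by rw [hcdef, hk]; push_cast; ring]
    exact Complex.exp_int_mul_two_pi_mul_I (2*k)
  have exp2 : Complex.exp (c * ((π:ℂ)/2)) = 1 := by
    rw [show c * ((π:ℂ)/2) = ((k : ℤ) : ℂ) * (2 * π * Complex.I) by
      rw [hcdef, hk]; push_cast; ring]
    exact Complex.exp_int_mul_two_pi_mul_I k
  have exp3 : Complex.exp (-c * (π:ℂ)) = 1 := by
    rw [show -c * (π:ℂ) = ((-(2*k) : ℤ) : ℂ) * (2 * π * Complex.I) by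
      rw [hcdef, hk]; push_cast; ring]
    exact Complex.exp_int_mul_two_pi_mul_I _
  have exp4 : Complex.exp (-c * ((π:ℂ)/2)) = 1 := by
    rw [show -c * ((π:ℂ)/2) = ((-k : ℤ) : ℂ) * (2 * π * Complex.I) by
      rw [hcdef, hk]; push_cast; ring]
    exact Complex.exp_int_mul_two_pi_mul_I _
  rw [hΦ]
  push_cast
  rw [exp1, exp2, exp3, exp4]
  field_simp
  ring


lemma evalS (a b u v : ℝ) (hv : v = u + 2/3)
    (hU : ∃ k : ℤ, 3*(a + b*u) = 4*k) (hV : ∃ k : ℤ, 3*(a + b*v) = 4*k)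
    (hA : b = 0 → ∃ k : ℤ, a = 4*k) :
    ∫ p in S u v, (Complex.exp (Complex.I * ((a * p.1 + b * p.2 : ℝ) : ℂ))
        + Complex.exp (-(Complex.I * ((a * p.1 + b * p.2 : ℝ) : ℂ))))
      = if a = 0 ∧ b = 0 then ((π^2/2 : ℝ) : ℂ) else 0 := by
  have hπ := Real.pi_pos
  have hg : Continuous (fun p : ℝ × ℝ => Complex.exp (Complex.I * ((a * p.1 + b * p.2 : ℝ) : ℂ))
      + Complex.exp (-(Complex.I * ((a * p.1 + b * p.2 : ℝ) : ℂ)))) := by fun_prop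
  rw [fubini_S u v _ hg]
  by_cases hb : b = 0
  · obtain ⟨k, hk⟩ := hA hb
    subst hb
    have hEq : EqOn
        (fun x => ∫ y in Icc (u*x) (v*x),
          (Complex.exp (Complex.I * ((a * x + 0 * y : ℝ) : ℂ))
            + Complex.exp (-(Complex.I * ((a * x + 0 * y : ℝ) : ℂ)))))
        (fun x => ((2/3 * x : ℝ) : ℂ) *
          (Complex.exp (Complex.I * a * x) + Complex.exp (-(Complex.I * a * x))))
        (Icc (π/2) π) := by
      intro x hx
      have hx0 : (0:ℝ) < x := lt_of_lt_of_le (by positivity) hx.1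
      simp only [zero_mul, add_zero]
      rw [setIntegral_const, Real.volume_real_Icc]
      rw [max_eq_left (by nlinarith : (0:ℝ) ≤ v*x - u*x)]
      rw [show v*x - u*x = 2/3*x by rw [hv]; ring]
      rw [Complex.real_smul]
      push_cast
      ring_nf
    rw [setIntegral_congr_fun measurableSet_Icc hEq]
    by_cases ha : a = 0
    · subst ha
      rw [if_pos ⟨rfl, rfl⟩]
      have : (fun x : ℝ => ((2/3 * x : ℝ) : ℂ) *
          (Complex.exp (Complex.I * (0:ℝ) * x) + Complex.exp (-(Complex.I * (0:ℝ) * x)))) =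
          fun x : ℝ => (4/3 : ℂ) * (x:ℂ) := by
        funext x
        push_cast
        simp
        ring
      rw [this]
      have hD : ∀ x : ℝ, HasDerivAt (fun t : ℝ => (2/3 : ℂ) * ((t:ℂ) * (t:ℂ))) ((4/3 : ℂ) * (x:ℂ)) x := by
        intro x
        have hid : HasDerivAt (fun t : ℝ => (t : ℂ)) 1 x := by
          simpa using (hasDerivAt_id (x : ℂ)).comp_ofReal
        have := (hid.mul hid).const_mul (2/3 : ℂ)
        refine this.congr_deriv ?_
        push_cast
        ring
      rw [integral_Icc_eq_integral_Ioc,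
        ← intervalIntegral.integral_of_le (by linarith : (π/2:ℝ) ≤ π)]
      rw [intervalIntegral.integral_eq_sub_of_hasDerivAt (fun x _ => hD x)
        (Continuous.intervalIntegrable (by fun_prop) _ _)]
      push_cast
      ring
    · rw [if_neg (by tauto)]
      exact xexp_int a k (by exact_mod_cast hk) ha
  · -- b ≠ 0
    set r1 : ℝ := a + b*v with hr1
    set r2 : ℝ := a + b*u with hr2
    have hcb : (Complex.I * (b:ℂ)) ≠ 0 := mul_ne_zero Complex.I_ne_zero (by exact_mod_cast hb)
    have hcb' : (-Complex.I * (b:ℂ)) ≠ 0 := by simpa [neg_mul] using (neg_ne_zero.mpr hcb)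
    have hEq : EqOn
        (fun x => ∫ y in Icc (u*x) (v*x),
          (Complex.exp (Complex.I * ((a * x + b * y : ℝ) : ℂ))
            + Complex.exp (-(Complex.I * ((a * x + b * y : ℝ) : ℂ)))))
        (fun x => (Complex.exp (Complex.I * (r1:ℝ) * x) - Complex.exp (Complex.I * (r2:ℝ) * x)
          + (Complex.exp (-(Complex.I * (r2:ℝ) * x)) - Complex.exp (-(Complex.I * (r1:ℝ) * x))))
          / (Complex.I * b)) (Icc (π/2) π) := by
      intro x hx
      have hx0 : (0:ℝ) < x := lt_of_lt_of_le (by positivity) hx.1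
      have hle' : u*x ≤ v*x := by nlinarith
      beta_reduce
      rw [integral_Icc_eq_integral_Ioc, ← intervalIntegral.integral_of_le hle']
      have s1 : ∀ y : ℝ, Complex.I * ((a * x + b * y : ℝ) : ℂ) =
          Complex.I * ((a*x : ℝ):ℂ) + (Complex.I * (b:ℂ)) * (y:ℂ) := by
        intro y; push_cast; ring
      simp_rw [s1, neg_add, ← neg_mul, Complex.exp_add]
      rw [intervalIntegral.integral_add
        ((Continuous.intervalIntegrable (by fun_prop) _ _))
        ((Continuous.intervalIntegrable (by fun_prop) _ _)),
        intervalIntegral.integral_const_mul, intervalIntegral.integral_const_mul,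
        integral_exp_mul_complex hcb, integral_exp_mul_complex hcb']
      have m1 : Complex.exp (Complex.I * ((a*x:ℝ):ℂ)) * Complex.exp ((Complex.I * (b:ℂ)) * ((v*x:ℝ):ℂ))
          = Complex.exp (Complex.I * (r1:ℝ) * x) := by
        rw [← Complex.exp_add]; congr 1; rw [hr1]; push_cast; ring
      have m2 : Complex.exp (Complex.I * ((a*x:ℝ):ℂ)) * Complex.exp ((Complex.I * (b:ℂ)) * ((u*x:ℝ):ℂ))
          = Complex.exp (Complex.I * (r2:ℝ) * x) := by
        rw [← Complex.exp_add]; congr 1; rw [hr2]; push_cast; ring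
      have m3 : Complex.exp (-Complex.I * ((a*x:ℝ):ℂ)) * Complex.exp ((-Complex.I * (b:ℂ)) * ((u*x:ℝ):ℂ))
          = Complex.exp (-Complex.I * (r2:ℝ) * x) := by
        rw [← Complex.exp_add]; congr 1; rw [hr2]; push_cast; ring
      have m4 : Complex.exp (-Complex.I * ((a*x:ℝ):ℂ)) * Complex.exp ((-Complex.I * (b:ℂ)) * ((v*x:ℝ):ℂ))
          = Complex.exp (-Complex.I * (r1:ℝ) * x) := by
        rw [← Complex.exp_add]; congr 1; rw [hr1]; push_cast; ring
      have hbC : (b:ℂ) ≠ 0 := by exact_mod_cast hb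
      rw [← m1, ← m2, ← m3, ← m4]
      push_cast
      field_simp [Complex.I_ne_zero, hbC]
      ring
    rw [setIntegral_congr_fun measurableSet_Icc hEq]
    rw [if_neg (by tauto)]
    rw [integral_div]
    have icmp : ∀ c : ℂ, IntegrableOn (fun x : ℝ => Complex.exp (c * (x:ℂ))) (Icc (π/2) π) volume := by
      intro c
      exact (Continuous.continuousOn (by fun_prop)).integrableOn_compact isCompact_Icc
    have i1 : IntegrableOn (fun x : ℝ => Complex.exp (Complex.I * (r1:ℝ) * (x:ℂ))) (Icc (π/2) π) volume := by
      exact (Continuous.continuousOn (by fun_prop)).integrableOn_compact isCompact_Icc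
    have i2 : IntegrableOn (fun x : ℝ => Complex.exp (Complex.I * (r2:ℝ) * (x:ℂ))) (Icc (π/2) π) volume := by
      exact (Continuous.continuousOn (by fun_prop)).integrableOn_compact isCompact_Icc
    have i3 : IntegrableOn (fun x : ℝ => Complex.exp (-(Complex.I * (r2:ℝ) * (x:ℂ)))) (Icc (π/2) π) volume := by
      exact (Continuous.continuousOn (by fun_prop)).integrableOn_compact isCompact_Icc
    have i4 : IntegrableOn (fun x : ℝ => Complex.exp (-(Complex.I * (r1:ℝ) * (x:ℂ)))) (Icc (π/2) π) volume := by
      exact (Continuous.continuousOn (by fun_prop)).integrableOn_compact isCompact_Icc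
    have hadd := integral_add (i1.sub i2) (i3.sub i4)
    simp only [Pi.add_apply, Pi.sub_apply] at hadd
    have h12 := integral_sub i1 i2
    have h34 := integral_sub i3 i4
    rw [hadd, h12, h34]
    obtain ⟨k1, hk1⟩ := hV
    obtain ⟨k2, hk2⟩ := hU
    rw [expIcc_symm r1 k1 (by rw [hr1]; exact_mod_cast hk1),
      expIcc_symm r2 k2 (by rw [hr2]; exact_mod_cast hk2)]
    ring_nf


def T (u v : ℝ) : Set (Fin 2 → ℝ) :=
  {ξ | (π/2 ≤ ξ 0 ∧ ξ 0 ≤ π) ∧ u * ξ 0 ≤ ξ 1 ∧ ξ 1 ≤ v * ξ 0}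


lemma coe_symm : ⇑(MeasurableEquiv.finTwoArrow (α := ℝ)).symm
    = fun p : ℝ × ℝ => (![p.1, p.2] : Fin 2 → ℝ) := by
  funext p
  rfl

lemma hTS (u v : ℝ) : T u v = (MeasurableEquiv.finTwoArrow (α := ℝ)).symm '' S u v := by
  rw [MeasurableEquiv.image_symm]
  ext ξ
  simp only [T, S, Set.mem_setOf_eq, Set.mem_preimage, MeasurableEquiv.finTwoArrow,
    MeasurableEquiv.coe_mk, finTwoArrowEquiv]
  rfl

lemma cont_mk : Continuous (fun p : ℝ × ℝ => (![p.1, p.2] : Fin 2 → ℝ)) := by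
  apply continuous_pi
  intro i
  fin_cases i
  · simpa using continuous_fst
  · simpa using continuous_snd

lemma mem_negimg (s : Set (Fin 2 → ℝ)) (ξ : Fin 2 → ℝ) : ξ ∈ Neg.neg '' s ↔ -ξ ∈ s := by
  constructor
  · rintro ⟨η, hη, rfl⟩
    simpa using hη
  · intro h
    exact ⟨-ξ, h, neg_neg ξ⟩

lemma pairIntegral (a b u v : ℝ) (hv : v = u + 2/3)
    (hU : ∃ k : ℤ, 3*(a + b*u) = 4*k) (hV : ∃ k : ℤ, 3*(a + b*v) = 4*k)
    (hA : b = 0 → ∃ k : ℤ, a = 4*k) :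
    ∫ ξ in T u v ∪ Neg.neg '' T u v,
      Complex.exp (Complex.I * ((a * ξ 0 + b * ξ 1 : ℝ) : ℂ))
      = if a = 0 ∧ b = 0 then ((π^2/2 : ℝ) : ℂ) else 0 := by
  have hπ := Real.pi_pos
  set f : (Fin 2 → ℝ) → ℂ :=
    fun ξ => Complex.exp (Complex.I * ((a * ξ 0 + b * ξ 1 : ℝ) : ℂ)) with hf
  have hfc : Continuous f := by
    rw [hf]
    fun_prop
  have hTcomp : IsCompact (T u v) := by
    rw [hTS, coe_symm]
    exact (S_compact u v).image cont_mk
  have hNcomp : IsCompact (Neg.neg '' T u v) := hTcomp.image continuous_neg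
  have hdisj : Disjoint (T u v) (Neg.neg '' T u v) := by
    rw [Set.disjoint_left]
    intro ξ h1 h2
    rw [mem_negimg] at h2
    have := h1.1.1
    have h2' := h2.1.1
    simp only [Pi.neg_apply] at h2'
    linarith
  rw [setIntegral_union hdisj hNcomp.measurableSet
    (hfc.continuousOn.integrableOn_compact hTcomp)
    (hfc.continuousOn.integrableOn_compact hNcomp)]
  have hnegemb : MeasurableEmbedding (Neg.neg : (Fin 2 → ℝ) → (Fin 2 → ℝ)) :=
    (Homeomorph.neg (Fin 2 → ℝ)).measurableEmbedding
  rw [(Measure.measurePreserving_neg (volume : Measure (Fin 2 → ℝ))).setIntegral_image_emb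
    hnegemb f (T u v)]
  have hInt2 : IntegrableOn (fun ξ : Fin 2 → ℝ => f (-ξ)) (T u v) volume := by
    have : Continuous (fun ξ : Fin 2 → ℝ => f (-ξ)) := by
      simp only [hf]; fun_prop
    exact this.continuousOn.integrableOn_compact hTcomp
  rw [← integral_add (hfc.continuousOn.integrableOn_compact hTcomp) hInt2]
  rw [hTS]
  rw [(MeasurePreserving.symm _ (volume_preserving_finTwoArrow ℝ)).setIntegral_image_emb
    (MeasurableEquiv.finTwoArrow (α := ℝ)).symm.measurableEmbedding _ (S u v)]
  have hpt : ∀ p : ℝ × ℝ,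
      f ((MeasurableEquiv.finTwoArrow (α := ℝ)).symm p)
        + f (-((MeasurableEquiv.finTwoArrow (α := ℝ)).symm p))
      = Complex.exp (Complex.I * ((a * p.1 + b * p.2 : ℝ) : ℂ))
        + Complex.exp (-(Complex.I * ((a * p.1 + b * p.2 : ℝ) : ℂ))) := by
    intro p
    rw [hf]
    have e0 : ((MeasurableEquiv.finTwoArrow (α := ℝ)).symm p) 0 = p.1 := rfl
    have e1 : ((MeasurableEquiv.finTwoArrow (α := ℝ)).symm p) 1 = p.2 := rfl
    have e0' : (-((MeasurableEquiv.finTwoArrow (α := ℝ)).symm p)) 0 = -p.1 := by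
      simp [Pi.neg_apply, e0]
    have e1' : (-((MeasurableEquiv.finTwoArrow (α := ℝ)).symm p)) 1 = -p.2 := by
      simp [Pi.neg_apply, e1]
    simp only [e0, e1, e0', e1']
    congr 2
    push_cast
    ring
  simp_rw [hpt]
  exact evalS a b u v hv hU hV hA


lemma E1 : trapPair 1 = T (-1) (-1/3) ∪ Neg.neg '' T (-1) (-1/3) := by
  have hπ := Real.pi_pos
  ext ξ
  rw [Set.mem_union, mem_negimg]
  show (((|ξ 0| ≤ π ∧ |ξ 1| ≤ π) ∧ (π/2 ≤ |ξ 0| ∨ π/2 ≤ |ξ 1|)) ∧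
      |ξ 1| ≤ |ξ 0| ∧ |ξ 0| ≤ 3*|ξ 1| ∧ ξ 0 * ξ 1 ≤ 0) ↔
    (ξ ∈ T (-1) (-1/3) ∨ -ξ ∈ T (-1) (-1/3))
  constructor
  · rintro ⟨⟨⟨h1, h2⟩, h3⟩, h4, h5, h6⟩
    have h7 : π/2 ≤ |ξ 0| := by rcases h3 with h | h; exacts [h, by linarith]
    rcases le_or_gt 0 (ξ 0) with hs | hs
    · left
      rw [abs_of_nonneg hs] at h1 h7 h4 h5
      have hξ1 : ξ 1 ≤ 0 := by nlinarith
      rw [abs_of_nonpos hξ1] at h4 h5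
      exact ⟨⟨h7, h1⟩, by linarith, by linarith⟩
    · right
      rw [abs_of_neg hs] at h1 h7 h4 h5
      have hξ1 : 0 ≤ ξ 1 := by nlinarith
      rw [abs_of_nonneg hξ1] at h4 h5
      refine ⟨⟨?_, ?_⟩, ?_, ?_⟩ <;> simp only [Pi.neg_apply] <;> linarith
  · rintro (⟨⟨h1, h2⟩, h3, h4⟩ | ⟨⟨h1, h2⟩, h3, h4⟩)
    · have hp : 0 < ξ 0 := by linarith
      have hn : ξ 1 ≤ 0 := by nlinarith
      have e0 : |ξ 0| = ξ 0 := abs_of_pos hp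
      have e1 : |ξ 1| = -(ξ 1) := abs_of_nonpos hn
      rw [e0, e1]
      exact ⟨⟨⟨by linarith, by linarith⟩, Or.inl (by linarith)⟩, by linarith, by linarith,
        by nlinarith⟩
    · simp only [Pi.neg_apply] at h1 h2 h3 h4
      have hp : ξ 0 < 0 := by linarith
      have hn : 0 ≤ ξ 1 := by nlinarith
      have e0 : |ξ 0| = -(ξ 0) := abs_of_neg hp
      have e1 : |ξ 1| = ξ 1 := abs_of_nonneg hn
      rw [e0, e1]
      exact ⟨⟨⟨by linarith, by linarith⟩, Or.inl (by linarith)⟩, by linarith, by linarith,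
        by nlinarith⟩

lemma E2 : trapPair 2 = T (-1/3) (1/3) ∪ Neg.neg '' T (-1/3) (1/3) := by
  have hπ := Real.pi_pos
  ext ξ
  rw [Set.mem_union, mem_negimg]
  show (((|ξ 0| ≤ π ∧ |ξ 1| ≤ π) ∧ (π/2 ≤ |ξ 0| ∨ π/2 ≤ |ξ 1|)) ∧ 3*|ξ 1| ≤ |ξ 0|) ↔
    (ξ ∈ T (-1/3) (1/3) ∨ -ξ ∈ T (-1/3) (1/3))
  constructor
  · rintro ⟨⟨⟨h1, h2⟩, h3⟩, h4⟩
    have h7 : π/2 ≤ |ξ 0| := by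
      rcases h3 with h | h
      · exact h
      · linarith
    rcases le_or_gt 0 (ξ 0) with hs | hs
    · left
      rw [abs_of_nonneg hs] at h1 h7 h4
      rcases abs_le.mp (show |ξ 1| ≤ 1/3 * ξ 0 by nlinarith [abs_nonneg (ξ 1)]) with ⟨ha, hb⟩
      exact ⟨⟨h7, h1⟩, by linarith, by linarith⟩
    · right
      rw [abs_of_neg hs] at h1 h7 h4
      rcases abs_le.mp (show |ξ 1| ≤ 1/3 * -(ξ 0) by nlinarith [abs_nonneg (ξ 1)]) with ⟨ha, hb⟩
      refine ⟨⟨?_, ?_⟩, ?_, ?_⟩ <;> simp only [Pi.neg_apply] <;> linarith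
  · rintro (⟨⟨h1, h2⟩, h3, h4⟩ | ⟨⟨h1, h2⟩, h3, h4⟩)
    · have hp : 0 < ξ 0 := by linarith
      have e0 : |ξ 0| = ξ 0 := abs_of_pos hp
      have e1 : |ξ 1| ≤ 1/3 * ξ 0 := abs_le.mpr ⟨by linarith, by linarith⟩
      rw [e0]
      exact ⟨⟨⟨by linarith, by nlinarith [abs_nonneg (ξ 1)]⟩, Or.inl (by linarith)⟩,
        by linarith⟩
    · simp only [Pi.neg_apply] at h1 h2 h3 h4
      have hp : ξ 0 < 0 := by linarith
      have e0 : |ξ 0| = -(ξ 0) := abs_of_neg hp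
      have e1 : |ξ 1| ≤ 1/3 * -(ξ 0) := by
        rw [show |ξ 1| = |-(ξ 1)| by rw [abs_neg]]
        exact abs_le.mpr ⟨by linarith, by linarith⟩
      rw [e0]
      exact ⟨⟨⟨by linarith, by nlinarith [abs_nonneg (ξ 1)]⟩, Or.inl (by linarith)⟩,
        by linarith⟩

lemma E3 : trapPair 3 = T (1/3) 1 ∪ Neg.neg '' T (1/3) 1 := by
  have hπ := Real.pi_pos
  ext ξ
  rw [Set.mem_union, mem_negimg]
  show (((|ξ 0| ≤ π ∧ |ξ 1| ≤ π) ∧ (π/2 ≤ |ξ 0| ∨ π/2 ≤ |ξ 1|)) ∧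
      |ξ 1| ≤ |ξ 0| ∧ |ξ 0| ≤ 3*|ξ 1| ∧ 0 ≤ ξ 0 * ξ 1) ↔
    (ξ ∈ T (1/3) 1 ∨ -ξ ∈ T (1/3) 1)
  constructor
  · rintro ⟨⟨⟨h1, h2⟩, h3⟩, h4, h5, h6⟩
    have h7 : π/2 ≤ |ξ 0| := by rcases h3 with h | h; exacts [h, by linarith]
    rcases le_or_gt 0 (ξ 0) with hs | hs
    · left
      rw [abs_of_nonneg hs] at h1 h7 h4 h5
      have hξ1 : 0 ≤ ξ 1 := by nlinarith
      rw [abs_of_nonneg hξ1] at h4 h5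
      exact ⟨⟨h7, h1⟩, by linarith, by linarith⟩
    · right
      rw [abs_of_neg hs] at h1 h7 h4 h5
      have hξ1 : ξ 1 ≤ 0 := by nlinarith
      rw [abs_of_nonpos hξ1] at h4 h5
      refine ⟨⟨?_, ?_⟩, ?_, ?_⟩ <;> simp only [Pi.neg_apply] <;> linarith
  · rintro (⟨⟨h1, h2⟩, h3, h4⟩ | ⟨⟨h1, h2⟩, h3, h4⟩)
    · have hp : 0 < ξ 0 := by linarith
      have hn : 0 ≤ ξ 1 := by nlinarith
      have e0 : |ξ 0| = ξ 0 := abs_of_pos hp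
      have e1 : |ξ 1| = ξ 1 := abs_of_nonneg hn
      rw [e0, e1]
      exact ⟨⟨⟨by linarith, by linarith⟩, Or.inl (by linarith)⟩, by linarith, by linarith,
        by nlinarith⟩
    · simp only [Pi.neg_apply] at h1 h2 h3 h4
      have hp : ξ 0 < 0 := by linarith
      have hn : ξ 1 ≤ 0 := by nlinarith
      have e0 : |ξ 0| = -(ξ 0) := abs_of_neg hp
      have e1 : |ξ 1| = -(ξ 1) := abs_of_nonpos hn
      rw [e0, e1]
      exact ⟨⟨⟨by linarith, by linarith⟩, Or.inl (by linarith)⟩, by linarith, by linarith,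
        by nlinarith⟩

def sw : (Fin 2 → ℝ) → (Fin 2 → ℝ) := fun ξ => ![ξ 1, ξ 0]

lemma sw_eq : sw = ⇑(MeasurableEquiv.finTwoArrow (α := ℝ)).symm ∘ Prod.swap ∘
    ⇑(MeasurableEquiv.finTwoArrow (α := ℝ)) := by
  funext ξ
  rfl

lemma sw_mp : MeasurePreserving sw (volume : Measure (Fin 2 → ℝ)) volume := by
  rw [sw_eq]
  exact (MeasurePreserving.symm _ (volume_preserving_finTwoArrow ℝ)).comp
    ((by rw [Measure.volume_eq_prod]; exact Measure.measurePreserving_swap :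
      MeasurePreserving (Prod.swap : ℝ×ℝ → ℝ×ℝ) volume volume).comp
      (volume_preserving_finTwoArrow ℝ))

lemma sw_emb : MeasurableEmbedding sw := by
  rw [sw_eq]
  exact ((MeasurableEquiv.finTwoArrow (α := ℝ)).symm.measurableEmbedding).comp
    ((MeasurableEquiv.prodComm (α := ℝ) (β := ℝ)).measurableEmbedding.comp
      (MeasurableEquiv.finTwoArrow (α := ℝ)).measurableEmbedding)

lemma sw_invol (ξ : Fin 2 → ℝ) : sw (sw ξ) = ξ := by
  funext i
  fin_cases i <;> rfl

lemma preimage_sw (s : Set (Fin 2 → ℝ)) : sw ⁻¹' s = sw '' s := by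
  ext ξ
  constructor
  · intro h
    exact ⟨sw ξ, h, sw_invol ξ⟩
  · rintro ⟨η, hη, rfl⟩
    rw [Set.mem_preimage, sw_invol]
    exact hη

lemma E4 : trapPair 4 = sw ⁻¹' trapPair 1 := by
  ext ξ
  rw [Set.mem_preimage]
  show (((|ξ 0| ≤ π ∧ |ξ 1| ≤ π) ∧ (π/2 ≤ |ξ 0| ∨ π/2 ≤ |ξ 1|)) ∧
      |ξ 0| ≤ |ξ 1| ∧ |ξ 1| ≤ 3*|ξ 0| ∧ ξ 0 * ξ 1 ≤ 0) ↔
    (((|ξ 1| ≤ π ∧ |ξ 0| ≤ π) ∧ (π/2 ≤ |ξ 1| ∨ π/2 ≤ |ξ 0|)) ∧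
      |ξ 0| ≤ |ξ 1| ∧ |ξ 1| ≤ 3*|ξ 0| ∧ ξ 1 * ξ 0 ≤ 0)
  rw [mul_comm (ξ 1) (ξ 0)]
  tauto

lemma E5 : trapPair 5 = sw ⁻¹' trapPair 2 := by
  ext ξ
  rw [Set.mem_preimage]
  show (((|ξ 0| ≤ π ∧ |ξ 1| ≤ π) ∧ (π/2 ≤ |ξ 0| ∨ π/2 ≤ |ξ 1|)) ∧ 3*|ξ 0| ≤ |ξ 1|) ↔
    (((|ξ 1| ≤ π ∧ |ξ 0| ≤ π) ∧ (π/2 ≤ |ξ 1| ∨ π/2 ≤ |ξ 0|)) ∧ 3*|ξ 0| ≤ |ξ 1|)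
  tauto

lemma E6 : trapPair 6 = sw ⁻¹' trapPair 3 := by
  ext ξ
  rw [Set.mem_preimage]
  show (((|ξ 0| ≤ π ∧ |ξ 1| ≤ π) ∧ (π/2 ≤ |ξ 0| ∨ π/2 ≤ |ξ 1|)) ∧
      |ξ 0| ≤ |ξ 1| ∧ |ξ 1| ≤ 3*|ξ 0| ∧ 0 ≤ ξ 0 * ξ 1) ↔
    (((|ξ 1| ≤ π ∧ |ξ 0| ≤ π) ∧ (π/2 ≤ |ξ 1| ∨ π/2 ≤ |ξ 0|)) ∧
      |ξ 0| ≤ |ξ 1| ∧ |ξ 1| ≤ 3*|ξ 0| ∧ 0 ≤ ξ 1 * ξ 0)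
  rw [mul_comm (ξ 1) (ξ 0)]
  tauto


lemma oneD (r : ℝ) (k : ℤ) (hr : r = 2 * k) :
    ∫ x in Icc (-(π/2)) (π/2), Complex.exp (Complex.I * r * x) =
      if r = 0 then (π : ℂ) else 0 := by
  by_cases h : r = 0
  · simp only [h, if_pos rfl, Complex.ofReal_zero, mul_zero, zero_mul, Complex.exp_zero]
    rw [setIntegral_const]
    rw [Real.volume_real_Icc]
    norm_num [max_eq_left Real.pi_pos.le]
  · rw [if_neg h]
    rw [integral_Icc_eq_integral_Ioc, ← intervalIntegral.integral_of_le (by linarith [Real.pi_pos] : -(π/2) ≤ π/2)]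
    have hc : (Complex.I * r : ℂ) ≠ 0 :=
      mul_ne_zero Complex.I_ne_zero (by exact_mod_cast h)
    have := integral_exp_mul_complex (a := -(π/2)) (b := π/2) hc
    simp only [mul_assoc] at this ⊢
    rw [this]
    push_cast
    have h1 : (Complex.I * (r * (π/2)) : ℂ) = ((k:ℂ) * π) * Complex.I := by
      push_cast [hr]; ring
    have h2 : (Complex.I * (r * (-(π/2))) : ℂ) = (-((k:ℂ) * π)) * Complex.I := by
      push_cast [hr]; ring
    rw [h1, h2, Complex.exp_mul_I, Complex.exp_mul_I, Complex.cos_neg, Complex.sin_neg,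
      Complex.sin_int_mul_pi]
    ring

lemma partB (n : Fin 2 → ℝ) (m : Fin 2 → ℤ) (hn : n = fun i => 2 * (m i : ℝ)) :
    ∫ ξ in trapPair 0, Complex.exp (Complex.I * (n ⬝ᵥ ξ : ℝ)) =
      if n = 0 then ((π ^ 2 : ℝ) : ℂ) else 0 := by
  have e := (MeasurableEquiv.finTwoArrow (α := ℝ))
  set S : Set (ℝ × ℝ) := Icc (-(π/2)) (π/2) ×ˢ Icc (-(π/2)) (π/2) with hS
  have hset : trapPair 0 = (MeasurableEquiv.finTwoArrow (α := ℝ)).symm '' S := by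
    rw [MeasurableEquiv.image_symm]
    ext ξ
    simp [trapPair, hS, abs_le, Set.mem_preimage, MeasurableEquiv.finTwoArrow]
    tauto
  rw [hset,
    (MeasurePreserving.symm _ (volume_preserving_finTwoArrow ℝ)).setIntegral_image_emb
      (MeasurableEquiv.finTwoArrow (α := ℝ)).symm.measurableEmbedding]
  have hval : ∀ p : ℝ × ℝ,
      Complex.exp (Complex.I * ((n ⬝ᵥ ((MeasurableEquiv.finTwoArrow (α := ℝ)).symm p) : ℝ))) =
      Complex.exp (Complex.I * (n 0) * p.1) * Complex.exp (Complex.I * (n 1) * p.2) := by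
    intro p
    rw [← Complex.exp_add]
    congr 1
    simp [MeasurableEquiv.finTwoArrow, dotProduct, Fin.sum_univ_two]
    push_cast
    ring
  simp_rw [hval]
  rw [hS, Measure.volume_eq_prod]
  rw [setIntegral_prod_mul (fun a : ℝ => Complex.exp (Complex.I * (n 0) * a))
    (fun a : ℝ => Complex.exp (Complex.I * (n 1) * a)) (Icc (-(π/2)) (π/2)) (Icc (-(π/2)) (π/2))]
  rw [oneD (n 0) (m 0) (by rw [hn]), oneD (n 1) (m 1) (by rw [hn])]
  have hzero : n = 0 ↔ n 0 = 0 ∧ n 1 = 0 := by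
    constructor
    · intro h; rw [h]; exact ⟨rfl, rfl⟩
    · intro ⟨h0, h1⟩; funext i; fin_cases i <;> assumption
  by_cases h0 : n 0 = 0 <;> by_cases h1 : n 1 = 0 <;>
    simp [h0, h1, hzero] <;> push_cast <;> ring

end Stmt11

/-- (a) each trapezoid pair `C̄_j` (`j = 1,…,6`) is a frequency support
of the quincunx lattice `Qℤ²`; (b) `[−π/2,π/2]²` is a frequency support of `2ℤ²`. -/
theorem stmt_11 (Q : Matrix (Fin 2) (Fin 2) ℝ) (hQ : Q = Matrix.of ![![2, 2], ![-2, 2]]) :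
    (∀ j : Fin 6, ∀ n : Fin 2 → ℝ, (∃ m : Fin 2 → ℤ, n = Q.mulVec fun i => (m i : ℝ)) →
      ∫ ξ in trapPair j.succ, Complex.exp (Complex.I * (n ⬝ᵥ ξ : ℝ)) =
        if n = 0 then ((π ^ 2 / 2 : ℝ) : ℂ) else 0) ∧
    (∀ n : Fin 2 → ℝ, (∃ m : Fin 2 → ℤ, n = fun i => 2 * (m i : ℝ)) →
      ∫ ξ in trapPair 0, Complex.exp (Complex.I * (n ⬝ᵥ ξ : ℝ)) =
        if n = 0 then ((π ^ 2 : ℝ) : ℂ) else 0) := by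
  constructor
  · rintro j n ⟨m, hm⟩
    have ha : n 0 = 2 * (m 0 : ℝ) + 2 * m 1 := by
      rw [hm, hQ]
      simp [Matrix.mulVec, dotProduct, Fin.sum_univ_two]
    have hb : n 1 = -2 * (m 0 : ℝ) + 2 * m 1 := by
      rw [hm, hQ]
      simp [Matrix.mulVec, dotProduct, Fin.sum_univ_two]
      try ring
    have hdot : ∀ ξ : Fin 2 → ℝ, (n ⬝ᵥ ξ : ℝ) = n 0 * ξ 0 + n 1 * ξ 1 := by
      intro ξ
      simp [dotProduct, Fin.sum_univ_two]
    have hiff : (n = 0) ↔ (n 0 = 0 ∧ n 1 = 0) := by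
      constructor
      · intro h; rw [h]; exact ⟨rfl, rfl⟩
      · rintro ⟨h0, h1⟩; funext i; fin_cases i <;> assumption
    simp_rw [hdot]
    rw [if_congr hiff rfl rfl]
    have L1 : ∃ k : ℤ, 3*(n 0 + n 1*(-1)) = 4*(k:ℝ) := ⟨3*m 0, by rw [ha, hb]; push_cast; ring⟩
    have L2 : ∃ k : ℤ, 3*(n 0 + n 1*(-1/3)) = 4*(k:ℝ) :=
      ⟨2*m 0 + m 1, by rw [ha, hb]; push_cast; ring⟩
    have L3 : ∃ k : ℤ, 3*(n 0 + n 1*(1/3)) = 4*(k:ℝ) :=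
      ⟨m 0 + 2*m 1, by rw [ha, hb]; push_cast; ring⟩
    have L4 : ∃ k : ℤ, 3*(n 0 + n 1*1) = 4*(k:ℝ) := ⟨3*m 1, by rw [ha, hb]; push_cast; ring⟩
    have L1' : ∃ k : ℤ, 3*(n 1 + n 0*(-1)) = 4*(k:ℝ) := ⟨-3*m 0, by rw [ha, hb]; push_cast; ring⟩
    have L2' : ∃ k : ℤ, 3*(n 1 + n 0*(-1/3)) = 4*(k:ℝ) :=
      ⟨-2*m 0 + m 1, by rw [ha, hb]; push_cast; ring⟩
    have L3' : ∃ k : ℤ, 3*(n 1 + n 0*(1/3)) = 4*(k:ℝ) :=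
      ⟨-m 0 + 2*m 1, by rw [ha, hb]; push_cast; ring⟩
    have L4' : ∃ k : ℤ, 3*(n 1 + n 0*1) = 4*(k:ℝ) := ⟨3*m 1, by rw [ha, hb]; push_cast; ring⟩
    have HA : n 1 = 0 → ∃ k : ℤ, n 0 = 4*(k:ℝ) := by
      intro h
      refine ⟨m 0, ?_⟩
      have hmm : (m 1 : ℝ) = m 0 := by rw [hb] at h; linarith
      rw [ha, hmm]; ring
    have HA' : n 0 = 0 → ∃ k : ℤ, n 1 = 4*(k:ℝ) := by
      intro h
      refine ⟨m 1, ?_⟩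
      have hmm : (m 0 : ℝ) = -(m 1 : ℝ) := by rw [ha] at h; linarith
      rw [hb, hmm]; ring
    fin_cases j
    · show ∫ ξ in trapPair 1, Complex.exp (Complex.I * ((n 0 * ξ 0 + n 1 * ξ 1 : ℝ) : ℂ)) =
          if n 0 = 0 ∧ n 1 = 0 then ((π ^ 2 / 2 : ℝ) : ℂ) else 0
      rw [show trapPair 1 = Stmt11.T (-1) (-1/3) ∪ Neg.neg '' Stmt11.T (-1) (-1/3) from
        Stmt11.E1]
      exact Stmt11.pairIntegral (n 0) (n 1) (-1) (-1/3) (by norm_num) L1 L2 HA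
    · show ∫ ξ in trapPair 2, Complex.exp (Complex.I * ((n 0 * ξ 0 + n 1 * ξ 1 : ℝ) : ℂ)) =
          if n 0 = 0 ∧ n 1 = 0 then ((π ^ 2 / 2 : ℝ) : ℂ) else 0
      rw [show trapPair 2 = Stmt11.T (-1/3) (1/3) ∪ Neg.neg '' Stmt11.T (-1/3) (1/3) from
        Stmt11.E2]
      exact Stmt11.pairIntegral (n 0) (n 1) (-1/3) (1/3) (by norm_num) L2 L3 HA
    · show ∫ ξ in trapPair 3, Complex.exp (Complex.I * ((n 0 * ξ 0 + n 1 * ξ 1 : ℝ) : ℂ)) =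
          if n 0 = 0 ∧ n 1 = 0 then ((π ^ 2 / 2 : ℝ) : ℂ) else 0
      rw [show trapPair 3 = Stmt11.T (1/3) 1 ∪ Neg.neg '' Stmt11.T (1/3) 1 from Stmt11.E3]
      exact Stmt11.pairIntegral (n 0) (n 1) (1/3) 1 (by norm_num) L3 L4 HA
    · show ∫ ξ in trapPair 4, Complex.exp (Complex.I * ((n 0 * ξ 0 + n 1 * ξ 1 : ℝ) : ℂ)) =
          if n 0 = 0 ∧ n 1 = 0 then ((π ^ 2 / 2 : ℝ) : ℂ) else 0
      rw [show trapPair 4 = Stmt11.sw ⁻¹' trapPair 1 from Stmt11.E4, Stmt11.preimage_sw,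
        Stmt11.sw_mp.setIntegral_image_emb Stmt11.sw_emb]
      simp_rw [show ∀ ξ : Fin 2 → ℝ,
          n 0 * (Stmt11.sw ξ) 0 + n 1 * (Stmt11.sw ξ) 1 = n 1 * ξ 0 + n 0 * ξ 1 from
        fun ξ => by show n 0 * ξ 1 + n 1 * ξ 0 = _; ring]
      rw [if_congr (and_comm : (n 0 = 0 ∧ n 1 = 0) ↔ _) rfl rfl]
      rw [show trapPair 1 = Stmt11.T (-1) (-1/3) ∪ Neg.neg '' Stmt11.T (-1) (-1/3) from
        Stmt11.E1]
      exact Stmt11.pairIntegral (n 1) (n 0) (-1) (-1/3) (by norm_num) L1' L2' HA'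
    · show ∫ ξ in trapPair 5, Complex.exp (Complex.I * ((n 0 * ξ 0 + n 1 * ξ 1 : ℝ) : ℂ)) =
          if n 0 = 0 ∧ n 1 = 0 then ((π ^ 2 / 2 : ℝ) : ℂ) else 0
      rw [show trapPair 5 = Stmt11.sw ⁻¹' trapPair 2 from Stmt11.E5, Stmt11.preimage_sw,
        Stmt11.sw_mp.setIntegral_image_emb Stmt11.sw_emb]
      simp_rw [show ∀ ξ : Fin 2 → ℝ,
          n 0 * (Stmt11.sw ξ) 0 + n 1 * (Stmt11.sw ξ) 1 = n 1 * ξ 0 + n 0 * ξ 1 from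
        fun ξ => by show n 0 * ξ 1 + n 1 * ξ 0 = _; ring]
      rw [if_congr (and_comm : (n 0 = 0 ∧ n 1 = 0) ↔ _) rfl rfl]
      rw [show trapPair 2 = Stmt11.T (-1/3) (1/3) ∪ Neg.neg '' Stmt11.T (-1/3) (1/3) from
        Stmt11.E2]
      exact Stmt11.pairIntegral (n 1) (n 0) (-1/3) (1/3) (by norm_num) L2' L3' HA'
    · show ∫ ξ in trapPair 6, Complex.exp (Complex.I * ((n 0 * ξ 0 + n 1 * ξ 1 : ℝ) : ℂ)) =
          if n 0 = 0 ∧ n 1 = 0 then ((π ^ 2 / 2 : ℝ) : ℂ) else 0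
      rw [show trapPair 6 = Stmt11.sw ⁻¹' trapPair 3 from Stmt11.E6, Stmt11.preimage_sw,
        Stmt11.sw_mp.setIntegral_image_emb Stmt11.sw_emb]
      simp_rw [show ∀ ξ : Fin 2 → ℝ,
          n 0 * (Stmt11.sw ξ) 0 + n 1 * (Stmt11.sw ξ) 1 = n 1 * ξ 0 + n 0 * ξ 1 from
        fun ξ => by show n 0 * ξ 1 + n 1 * ξ 0 = _; ring]
      rw [if_congr (and_comm : (n 0 = 0 ∧ n 1 = 0) ↔ _) rfl rfl]
      rw [show trapPair 3 = Stmt11.T (1/3) 1 ∪ Neg.neg '' Stmt11.T (1/3) 1 from Stmt11.E3]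
      exact Stmt11.pairIntegral (n 1) (n 0) (1/3) 1 (by norm_num) L3' L4' HA'
  · rintro n ⟨m, hm⟩
    exact Stmt11.partB n m hm
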